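/- If strings x and y satisfy edit distance at most k, and x is partitioned into k+1 consecutive pieces, then at least one piece occurs as a (contiguous) substring of y. -/

import Mathlib

/-- Costs of edit operations (as in the former `Mathlib.Data.List.EditDistance.Defs`). -/
structure Levenshtein.Cost (α β δ : Type*) where
  delete : α → δ
  insert : β → δ
  substitute : α → β → δ

/-- The default cost: unit deletions and insertions, substitutions cost 0 if equal else 1. -/
def Levenshtein.defaultCost {α : Type*} [DecidableEq α] : Levenshtein.Cost α α ℕ where
  delete _ := 1
  insert _ := 1
  substitute a b := if a = b then 0 else 1

/-- Levenshtein distance, by the recursion the removed Mathlib definition satisfied. -/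
def levenshtein {α β δ : Type*} [AddZeroClass δ] [Min δ] (C : Levenshtein.Cost α β δ) :
    List α → List β → δ
  | [], [] => 0
  | [], y :: ys => C.insert y + levenshtein C [] ys
  | x :: xs, [] => C.delete x + levenshtein C xs []
  | x :: xs, y :: ys =>
    min (C.delete x + levenshtein C xs (y :: ys))
      (min (C.insert y + levenshtein C (x :: xs) ys) (C.substitute x y + levenshtein C xs ys))

@[simp] lemma levenshtein_nil_nil {α β δ : Type*} [AddZeroClass δ] [Min δ]
    (C : Levenshtein.Cost α β δ) : levenshtein C [] [] = 0 := by rw [levenshtein]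

lemma levenshtein_cons_nil {α β δ : Type*} [AddZeroClass δ] [Min δ]
    (C : Levenshtein.Cost α β δ) (x : α) (xs : List α) :
    levenshtein C (x :: xs) [] = C.delete x + levenshtein C xs [] := by rw [levenshtein]

lemma levenshtein_cons_cons {α β δ : Type*} [AddZeroClass δ] [Min δ]
    (C : Levenshtein.Cost α β δ) (x : α) (xs : List α) (y : β) (ys : List β) :
    levenshtein C (x :: xs) (y :: ys) =
      min (C.delete x + levenshtein C xs (y :: ys))
        (min (C.insert y + levenshtein C (x :: xs) ys) (C.substitute x y + levenshtein C xs ys)) := by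
  rw [levenshtein]

@[simp] lemma Levenshtein.defaultCost_delete {α : Type*} [DecidableEq α] (a : α) :
    (Levenshtein.defaultCost : Levenshtein.Cost α α ℕ).delete a = 1 := rfl

@[simp] lemma Levenshtein.defaultCost_insert {α : Type*} [DecidableEq α] (a : α) :
    (Levenshtein.defaultCost : Levenshtein.Cost α α ℕ).insert a = 1 := rfl

@[simp] lemma Levenshtein.defaultCost_substitute {α : Type*} [DecidableEq α] (a b : α) :
    (Levenshtein.defaultCost : Levenshtein.Cost α α ℕ).substitute a b = if a = b then 0 else 1 := rfl

private lemma flatten_len_ge {α : Type*} (t : List (List α)) (h : ∀ p ∈ t, p ≠ []) :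
    t.length ≤ t.flatten.length := by
  induction t with
  | nil => simp
  | cons a t ih =>
    simp only [List.flatten_cons, List.length_append, List.length_cons]
    have ha := h a (by simp)
    have : 1 ≤ a.length := by
      cases a with
      | nil => simp at ha
      | cons _ _ => simp
    have := ih (fun p hp => h p (by simp [hp]))
    omega

private lemma lev_nil_right {α : Type*} [DecidableEq α] (x : List α) :
    levenshtein Levenshtein.defaultCost x [] = x.length := by
  induction x with
  | nil => simp
  | cons a x ih => simp [levenshtein_cons_nil, ih, Nat.add_comm]

private lemma aux {α : Type*} [DecidableEq α] :
    ∀ (n : ℕ) (x y : List α) (k : ℕ) (h : List α) (t : List (List α)),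
      x.length + y.length ≤ n →
      levenshtein Levenshtein.defaultCost x y ≤ k →
      t.length = k →
      (h :: t).flatten = x →
      h <+: y ∨ ∃ p ∈ t, p <:+: y := by
  intro n
  induction n with
  | zero =>
    intro x y k h t hn hed hk hj
    have hx : x = [] := by
      cases x with
      | nil => rfl
      | cons a x => simp at hn
    subst hx
    left
    have : h = [] := by
      simp only [List.flatten_cons] at hj
      exact List.append_eq_nil_iff.mp hj |>.1
    simp [this]
  | succ m ih =>
    intro x y k h t hn hed hk hj
    cases x with
    | nil =>
      left
      have : h = [] := by
        simp only [List.flatten_cons] at hj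
        exact List.append_eq_nil_iff.mp hj |>.1
      simp [this]
    | cons a x' =>
      cases hh : h with
      | nil =>
        left; subst hh; exact List.nil_prefix
      | cons a' p =>
        subst hh
        cases y with
        | nil =>
          -- some piece in t is empty
          rw [lev_nil_right] at hed
          by_cases hall : ∀ q ∈ t, q ≠ []
          · exfalso
            have h1 := flatten_len_ge t hall
            have h2 : ((a' :: p) :: t).flatten.length = (a :: x').length := by rw [hj]
            simp only [List.flatten_cons, List.length_append, List.length_cons] at h2
            simp only [List.length_cons] at hed
            omega
          · push_neg at hall
            obtain ⟨q, hq, hq0⟩ := hall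
            right
            exact ⟨q, hq, by simp [hq0]⟩
        | cons b y' =>
          -- h = a' :: p, and flatten gives a' = a
          simp only [List.flatten_cons, List.cons_append] at hj
          have ha : a' = a := (List.cons.injEq _ _ _ _).mp hj |>.1
          have hrest : p ++ t.flatten = x' := (List.cons.injEq _ _ _ _).mp hj |>.2
          subst ha
          rw [levenshtein_cons_cons] at hed
          rcases min_le_iff.mp hed with hdel | hrest2
          · -- delete: 1 + lev x' (b::y') ≤ k
            simp only [Levenshtein.defaultCost_delete] at hdel
            obtain ⟨k', rfl⟩ : ∃ k', k = k' + 1 := ⟨k - 1, by omega⟩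
            have hlev : levenshtein Levenshtein.defaultCost x' (b :: y') ≤ k' := by omega
            cases t with
            | nil => simp at hk
            | cons q t' =>
              have hk' : t'.length = k' := by simpa using hk
              have hj' : ((p ++ q) :: t').flatten = x' := by
                simp only [List.flatten_cons] at hrest ⊢
                rw [← hrest]; simp [List.append_assoc]
              have hn' : x'.length + (b :: y').length ≤ m := by
                simp only [List.length_cons] at hn ⊢; omega
              rcases ih x' (b :: y') k' (p ++ q) t' hn' hlev hk' hj' with hpre | ⟨r, hr, hri⟩
              · right
                refine ⟨q, by simp, ?_⟩
                obtain ⟨s, hs⟩ := hpre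
                exact ⟨p, s, by simp [← hs]⟩
              · exact Or.inr ⟨r, by simp [hr], hri⟩
          · rcases min_le_iff.mp hrest2 with hins | hsub
            · -- insert: 1 + lev (a::x') y' ≤ k
              simp only [Levenshtein.defaultCost_insert] at hins
              obtain ⟨k', rfl⟩ : ∃ k', k = k' + 1 := ⟨k - 1, by omega⟩
              have hlev : levenshtein Levenshtein.defaultCost (a' :: x') y' ≤ k' := by omega
              cases t with
              | nil => simp at hk
              | cons q t' =>
                have hk' : t'.length = k' := by simpa using hk
                have hj' : (((a' :: p) ++ q) :: t').flatten = a' :: x' := by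
                  simp only [List.flatten_cons] at hrest ⊢
                  simp [← hrest, List.append_assoc]
                have hn' : (a' :: x').length + y'.length ≤ m := by
                  simp only [List.length_cons] at hn ⊢; omega
                rcases ih (a' :: x') y' k' ((a' :: p) ++ q) t' hn' hlev hk' hj' with hpre | ⟨r, hr, hri⟩
                · right
                  refine ⟨q, by simp, ?_⟩
                  obtain ⟨s, hs⟩ := hpre
                  exact List.infix_cons (show q <:+: y' from ⟨a' :: p, s, by simp [← hs]⟩)
                · exact Or.inr ⟨r, by simp [hr], hri.trans (List.infix_cons (List.infix_refl _))⟩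
            · -- substitute
              simp only [Levenshtein.defaultCost_substitute] at hsub
              by_cases hab : a' = b
              · simp only [if_pos hab, Nat.zero_add] at hsub
                have hn' : x'.length + y'.length ≤ m := by
                  simp only [List.length_cons] at hn; omega
                have hj' : (p :: t).flatten = x' := by simpa using hrest
                rcases ih x' y' k p t hn' hsub hk hj' with hpre | ⟨r, hr, hri⟩
                · left
                  subst hab
                  exact List.cons_prefix_cons.mpr ⟨rfl, hpre⟩
                · exact Or.inr ⟨r, hr, hri.trans (List.infix_cons (List.infix_refl _))⟩
              · simp only [if_neg hab] at hsub
                obtain ⟨k', rfl⟩ : ∃ k', k = k' + 1 := ⟨k - 1, by omega⟩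
                have hlev : levenshtein Levenshtein.defaultCost x' y' ≤ k' := by omega
                cases t with
                | nil => simp at hk
                | cons q t' =>
                  have hk' : t'.length = k' := by simpa using hk
                  have hj' : ((p ++ q) :: t').flatten = x' := by
                    simp only [List.flatten_cons] at hrest ⊢
                    rw [← hrest]; simp [List.append_assoc]
                  have hn' : x'.length + y'.length ≤ m := by
                    simp only [List.length_cons] at hn; omega
                  rcases ih x' y' k' (p ++ q) t' hn' hlev hk' hj' with hpre | ⟨r, hr, hri⟩
                  · right
                    refine ⟨q, by simp, ?_⟩
                    obtain ⟨s, hs⟩ := hpre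
                    exact (show q <:+: y' from ⟨p, s, by simp [← hs]⟩).trans
                      (List.infix_cons (List.infix_refl _))
                  · exact Or.inr ⟨r, by simp [hr],
                      hri.trans (List.infix_cons (List.infix_refl _))⟩

/-- If `ed(x,y) ≤ k` and `x` is partitioned into `k+1` consecutive pieces,
then some piece occurs as a contiguous substring (infix) of `y`. -/
theorem piece_infix_of_editDist_le {α : Type*} [DecidableEq α]
    (k : ℕ) (x y : List α)
    (hed : levenshtein Levenshtein.defaultCost x y ≤ k)
    (pieces : List (List α))
    (hlen : pieces.length = k + 1)
    (hjoin : pieces.flatten = x) :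
    ∃ p ∈ pieces, p <:+: y := by
  cases pieces with
  | nil => simp at hlen
  | cons h t =>
    have hk : t.length = k := by simpa using hlen
    rcases aux (x.length + y.length) x y k h t le_rfl hed hk hjoin with hpre | ⟨r, hr, hri⟩
    · exact ⟨h, by simp, hpre.isInfix⟩
    · exact ⟨r, by simp [hr], hri⟩
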